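/- For X₁, X₂, X₃ > 0 with X₁X₂X₃ = 1, parametrized as X_i = e^{(1/2) a_i·φ} with a₁ = (√2, 2/√6), a₂ = (−√2, 2/√6), a₃ = (0, −4/√6) and φ ∈ ℝ², the superpotential Ŵ = √2 g (X₁ + X₂ + X₃) satisfies (∂Ŵ/∂φ₁)² + (∂Ŵ/∂φ₂)² − (2/3) Ŵ² = −4g² (X₁⁻¹ + X₂⁻¹ + X₃⁻¹). -/

import Mathlib

noncomputable section

/-- `X₁ = e^{(1/2) a₁·φ}` with `a₁ = (√2, 2/√6)`. -/
def X1 (φ₁ φ₂ : ℝ) : ℝ :=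
  Real.exp ((1 / 2) * (Real.sqrt 2 * φ₁ + (2 / Real.sqrt 6) * φ₂))

/-- `X₂ = e^{(1/2) a₂·φ}` with `a₂ = (−√2, 2/√6)`. -/
def X2 (φ₁ φ₂ : ℝ) : ℝ :=
  Real.exp ((1 / 2) * (-Real.sqrt 2 * φ₁ + (2 / Real.sqrt 6) * φ₂))

/-- `X₃ = e^{(1/2) a₃·φ}` with `a₃ = (0, −4/√6)`. -/
def X3 (φ₁ φ₂ : ℝ) : ℝ :=
  Real.exp ((1 / 2) * (-(4 / Real.sqrt 6) * φ₂))

/-- The superpotential `Ŵ = √2 g (X₁ + X₂ + X₃)`. -/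
def What (g φ₁ φ₂ : ℝ) : ℝ :=
  Real.sqrt 2 * g * (X1 φ₁ φ₂ + X2 φ₁ φ₂ + X3 φ₁ φ₂)

lemma expDeriv (c d x : ℝ) :
    HasDerivAt (fun t => Real.exp (c * t + d)) (c * Real.exp (c * x + d)) x := by
  have h : HasDerivAt (fun t : ℝ => c * t + d) c x := by
    simpa using ((hasDerivAt_id x).const_mul c).add_const d
  simpa [mul_comm] using h.exp

lemma hd1 (g φ₁ φ₂ : ℝ) :
    HasDerivAt (fun t => What g t φ₂)
      (Real.sqrt 2 * g * (Real.sqrt 2 / 2 * X1 φ₁ φ₂ + -(Real.sqrt 2 / 2) * X2 φ₁ φ₂)) φ₁ := by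
  have k1 : ∀ t, X1 t φ₂
      = Real.exp (Real.sqrt 2 / 2 * t + 1 / Real.sqrt 6 * φ₂) := by
    intro t; unfold X1; congr 1; field_simp
  have k2 : ∀ t, X2 t φ₂
      = Real.exp (-(Real.sqrt 2 / 2) * t + 1 / Real.sqrt 6 * φ₂) := by
    intro t; unfold X2; congr 1; field_simp
  have h1 : HasDerivAt (fun t : ℝ => X1 t φ₂) (Real.sqrt 2 / 2 * X1 φ₁ φ₂) φ₁ := by
    simp only [k1]; exact expDeriv _ _ _
  have h2 : HasDerivAt (fun t : ℝ => X2 t φ₂) (-(Real.sqrt 2 / 2) * X2 φ₁ φ₂) φ₁ := by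
    simp only [k2]; exact expDeriv _ _ _
  have h3 : HasDerivAt (fun t : ℝ => X3 t φ₂) (0 : ℝ) φ₁ := hasDerivAt_const _ _
  have := ((h1.add h2).add h3).const_mul (Real.sqrt 2 * g)
  simpa [What, add_zero, mul_add] using this

lemma hd2 (g φ₁ φ₂ : ℝ) :
    HasDerivAt (fun t => What g φ₁ t)
      (Real.sqrt 2 * g * ((1 / Real.sqrt 6) * X1 φ₁ φ₂ + (1 / Real.sqrt 6) * X2 φ₁ φ₂
        + -(2 / Real.sqrt 6) * X3 φ₁ φ₂)) φ₂ := by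
  have k1 : ∀ t, X1 φ₁ t
      = Real.exp (1 / Real.sqrt 6 * t + Real.sqrt 2 / 2 * φ₁) := by
    intro t; unfold X1; congr 1; field_simp; ring
  have k2 : ∀ t, X2 φ₁ t
      = Real.exp (1 / Real.sqrt 6 * t + -(Real.sqrt 2 / 2) * φ₁) := by
    intro t; unfold X2; congr 1; field_simp; ring
  have k3 : ∀ t, X3 φ₁ t
      = Real.exp (-(2 / Real.sqrt 6) * t + 0) := by
    intro t; unfold X3; congr 1; field_simp; ring
  have h1 : HasDerivAt (fun t : ℝ => X1 φ₁ t) ((1 / Real.sqrt 6) * X1 φ₁ φ₂) φ₂ := by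
    simp only [k1]; exact expDeriv _ _ _
  have h2 : HasDerivAt (fun t : ℝ => X2 φ₁ t) ((1 / Real.sqrt 6) * X2 φ₁ φ₂) φ₂ := by
    simp only [k2]; exact expDeriv _ _ _
  have h3 : HasDerivAt (fun t : ℝ => X3 φ₁ t) (-(2 / Real.sqrt 6) * X3 φ₁ φ₂) φ₂ := by
    simp only [k3]; exact expDeriv _ _ _
  have := ((h1.add h2).add h3).const_mul (Real.sqrt 2 * g)
  simpa [What, mul_add] using this

/-- the STU-model superpotential identity
`(∂Ŵ/∂φ₁)² + (∂Ŵ/∂φ₂)² − (2/3) Ŵ² = −4g² (X₁⁻¹ + X₂⁻¹ + X₃⁻¹)`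
(so that it reproduces the scalar potential `V̂ = −4g² Σᵢ Xᵢ⁻¹`). -/
theorem stu_superpotential_identity (g φ₁ φ₂ : ℝ) :
    (deriv (fun t => What g t φ₂) φ₁) ^ 2 + (deriv (fun t => What g φ₁ t) φ₂) ^ 2
        - (2 / 3) * (What g φ₁ φ₂) ^ 2
      = -4 * g ^ 2 * ((X1 φ₁ φ₂)⁻¹ + (X2 φ₁ φ₂)⁻¹ + (X3 φ₁ φ₂)⁻¹) := by
  have s2 : Real.sqrt 2 * Real.sqrt 2 = 2 := Real.mul_self_sqrt (by norm_num)
  have s6 : Real.sqrt 6 * Real.sqrt 6 = 6 := Real.mul_self_sqrt (by norm_num)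
  have hs6 : Real.sqrt 6 ≠ 0 := by positivity
  have hAB : X1 φ₁ φ₂ * X2 φ₁ φ₂ = (X3 φ₁ φ₂)⁻¹ := by
    unfold X1 X2 X3; rw [← Real.exp_add, ← Real.exp_neg]; congr 1; ring
  have hBC : X2 φ₁ φ₂ * X3 φ₁ φ₂ = (X1 φ₁ φ₂)⁻¹ := by
    unfold X1 X2 X3; rw [← Real.exp_add, ← Real.exp_neg]; congr 1; ring
  have hAC : X1 φ₁ φ₂ * X3 φ₁ φ₂ = (X2 φ₁ φ₂)⁻¹ := by
    unfold X1 X2 X3; rw [← Real.exp_add, ← Real.exp_neg]; congr 1; ring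
  rw [(hd1 g φ₁ φ₂).deriv, (hd2 g φ₁ φ₂).deriv, What, ← hAB, ← hBC, ← hAC]
  set A := X1 φ₁ φ₂
  set B := X2 φ₁ φ₂
  set C := X3 φ₁ φ₂
  have E1 : Real.sqrt 2 * g * (Real.sqrt 2 / 2 * A + -(Real.sqrt 2 / 2) * B)
      = g * (A - B) := by linear_combination (g * (A - B) / 2) * s2
  have E2 : (Real.sqrt 2 * g * ((1 / Real.sqrt 6) * A + (1 / Real.sqrt 6) * B
        + -(2 / Real.sqrt 6) * C)) ^ 2 = 1 / 3 * g ^ 2 * (A + B - 2 * C) ^ 2 := by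
    field_simp
    linear_combination 3 * g ^ 2 * (A + B - 2 * C) ^ 2 * s2 - g ^ 2 * (A + B - 2 * C) ^ 2 * s6
  have E3 : (Real.sqrt 2 * g * (A + B + C)) ^ 2 = 2 * g ^ 2 * (A + B + C) ^ 2 := by
    linear_combination g ^ 2 * (A + B + C) ^ 2 * s2
  rw [E1, E2, E3]
  ring
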